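/- Let G be a finite connected weighted graph, n ∈ (1,∞), κ ∈ ℝ, and suppose f : V → ℂ is a nonzero eigenfunction of −Δ with eigenvalue λ > 0 which satisfies CD(n,κ). Then for every real α > 2 − 2κ/λ and every vertex x ∈ V: |∇f|²(x) + α·λ·|f(x)|² ≤ λ·((α² − 4/n)·λ + 2κα)/((α − 2)·λ + 2κ) · max_{z ∈ V} |f(z)|². -/

import Mathlib

open Finset ComplexConjugate
open scoped Classical

namespace Mag

variable {V : Type*}

/-- The degree of a vertex: total weight of incident edges. -/
noncomputable def deg [Fintype V] (p : V → V → ℝ) (x : V) : ℝ := ∑ y, p x y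

/-- Adjacency: positive edge weight. -/
def Adj (p : V → V → ℝ) (x y : V) : Prop := 0 < p x y

/-- Axioms of a weighted graph: symmetric nonnegative weights, no loops,
positive degrees. -/
structure IsWeightedGraph [Fintype V] (p : V → V → ℝ) : Prop where
  symm : ∀ x y, p x y = p y x
  nonneg : ∀ x y, 0 ≤ p x y
  loopless : ∀ x, p x x = 0
  deg_pos : ∀ x, 0 < deg p x

/-- Connectivity: any two vertices are joined by a path of successively
adjacent vertices. -/
def Connected (p : V → V → ℝ) : Prop :=
  ∀ x y : V, ∃ L : List V,
    List.Chain (Adj p) x L ∧ (x :: L).getLast (List.cons_ne_nil x L) = y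

/-- The graph distance from `x` to `y` is at most `n`. -/
def distLE (p : V → V → ℝ) (x y : V) (n : ℕ) : Prop :=
  ∃ L : List V, L.length ≤ n ∧ List.Chain (Adj p) x L ∧
    (x :: L).getLast (List.cons_ne_nil x L) = y

/-- `D` is the diameter: every pair of vertices is at distance at most `D`,
and some pair is at distance at least `D`. -/
def IsDiameter (p : V → V → ℝ) (D : ℕ) : Prop :=
  (∀ x y, distLE p x y D) ∧ ∃ x y, ∀ n, distLE p x y n → D ≤ n

/-- The (normalized) graph Laplace operator on complex-valued functions. -/
noncomputable def lap [Fintype V] (p : V → V → ℝ) (f : V → ℂ) (x : V) : ℂ :=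
  (deg p x : ℂ)⁻¹ * ∑ y, (p x y : ℂ) * (f y - f x)

/-- The graph Laplace operator acting on real-valued functions. -/
noncomputable def lapR [Fintype V] (p : V → V → ℝ) (u : V → ℝ) (x : V) : ℝ :=
  (deg p x)⁻¹ * ∑ y, p x y * (u y - u x)

/-- The energy `|∇f|²(x)` of a function at a vertex. -/
noncomputable def energy [Fintype V] (p : V → V → ℝ) (f : V → ℂ) (x : V) : ℝ :=
  (deg p x)⁻¹ * ∑ y, p x y * ‖f y - f x‖ ^ 2

/-- The first curvature operator `Γ`. -/
noncomputable def gamma [Fintype V] (p : V → V → ℝ) (f g : V → ℂ) (x : V) : ℂ :=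
  (1 / 2) * (lap p (fun v => f v * conj (g v)) x - f x * conj (lap p g x)
    - lap p f x * conj (g x))

/-- The iterated (Ricci) curvature operator `Γ₂`. -/
noncomputable def gamma2 [Fintype V] (p : V → V → ℝ) (f g : V → ℂ) (x : V) : ℂ :=
  (1 / 2) * (lap p (gamma p f g) x - gamma p f (lap p g) x - gamma p (lap p f) g x)

/-- `f` satisfies the curvature-dimension inequality `CD(n,κ)`:
`Γ₂(f,f)(x) ≥ (1/n)|Δf(x)|² + κ·Γ(f,f)(x)` at every vertex. -/
def SatCD [Fintype V] (p : V → V → ℝ) (n κ : ℝ) (f : V → ℂ) : Prop :=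
  ∀ x : V, (1 / n) * ‖lap p f x‖ ^ 2 + κ * (gamma p f f x).re ≤ (gamma2 p f f x).re

/-- The magnetic Laplace operator. -/
noncomputable def magLap [Fintype V] (p : V → V → ℝ) (σ : V → V → ℂ)
    (f : V → ℂ) (x : V) : ℂ :=
  (deg p x : ℂ)⁻¹ * ∑ y, (p x y : ℂ) * (σ x y * f y - f x)

/-- The magnetic energy `|∇^σ f|²(x)`. -/
noncomputable def magEnergy [Fintype V] (p : V → V → ℝ) (σ : V → V → ℂ)
    (f : V → ℂ) (x : V) : ℝ :=
  (deg p x)⁻¹ * ∑ y, p x y * ‖σ x y * f y - f x‖ ^ 2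

/-- The first magnetic curvature operator `Γ^σ`. -/
noncomputable def magGamma [Fintype V] (p : V → V → ℝ) (σ : V → V → ℂ)
    (f g : V → ℂ) (x : V) : ℂ :=
  (1 / 2) * (magLap p σ (fun v => f v * conj (g v)) x - f x * conj (magLap p σ g x)
    - magLap p σ f x * conj (g x))

/-- The magnetic Ricci curvature operator `Γ₂^σ`. -/
noncomputable def magGamma2 [Fintype V] (p : V → V → ℝ) (σ : V → V → ℂ)
    (f g : V → ℂ) (x : V) : ℂ :=
  (1 / 2) * (lap p (magGamma p σ f g) x - magGamma p σ f (magLap p σ g) x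
    - magGamma p σ (magLap p σ f) g x)

/-- `f` satisfies the magnetic curvature-dimension inequality `CD^σ(n,κ)`. -/
def SatCDSigma [Fintype V] (p : V → V → ℝ) (σ : V → V → ℂ) (n κ : ℝ)
    (f : V → ℂ) : Prop :=
  ∀ x : V, (1 / n) * ‖magLap p σ f x‖ ^ 2 + κ * (magGamma p σ f f x).re
    ≤ (magGamma2 p σ f f x).re

/-- A signature with values in the group `S¹_ℓ` of `ℓ`-th roots of unity:
`σ_{xy}^ℓ = 1` and `σ_{yx} = σ_{xy}⁻¹` on oriented edges. -/
structure IsSignature (p : V → V → ℝ) (σ : V → V → ℂ) (ℓ : ℕ) : Prop where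
  mem : ∀ x y, Adj p x y → σ x y ^ ℓ = 1
  inv : ∀ x y, Adj p x y → σ x y * σ y x = 1

/-- The signature is entire: its values (on oriented edges) generate all of
`S¹_ℓ`, i.e. every `ℓ`-th root of unity is a product of signature values. -/
def Entire (p : V → V → ℝ) (σ : V → V → ℂ) (ℓ : ℕ) : Prop :=
  ∀ z : ℂ, z ^ ℓ = 1 →
    ∃ L : List (V × V), (∀ e ∈ L, Adj p e.1 e.2) ∧ (L.map fun e => σ e.1 e.2).prod = z

/-- The product of the signature values along the consecutive edges of a
list of vertices. -/
noncomputable def sigProd (σ : V → V → ℂ) (L : List V) : ℂ :=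
  ((L.zip L.tail).map fun e => σ e.1 e.2).prod

/-- A directed cycle: a closed walk along adjacent vertices. -/
def IsCycle (p : V → V → ℝ) (L : List V) : Prop :=
  2 ≤ L.length ∧ L.Chain' (Adj p) ∧ L.head? = L.getLast?

/-- A magnetic graph is balanced if the signature product along every directed
cycle equals `1`. -/
def Balanced (p : V → V → ℝ) (σ : V → V → ℂ) : Prop :=
  ∀ L : List V, IsCycle p L → sigProd σ L = 1

/-- A directed cycle whose signature product generates `S¹_ℓ`. -/
def IsGenCycle (p : V → V → ℝ) (σ : V → V → ℂ) (ℓ : ℕ) (L : List V) : Prop :=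
  IsCycle p L ∧ ∀ z : ℂ, z ^ ℓ = 1 → ∃ m : ℕ, sigProd σ L ^ m = z

/-- `g` is the magnetic girth: the length of a shortest directed cycle whose
signature product generates `S¹_ℓ`.  (A list of `g+1` vertices, with equal
endpoints, traverses `g` edges.) -/
def IsMagGirth (p : V → V → ℝ) (σ : V → V → ℂ) (ℓ : ℕ) (g : ℕ) : Prop :=
  (∃ L, IsGenCycle p σ ℓ L ∧ L.length = g + 1) ∧
  ∀ L, IsGenCycle p σ ℓ L → g + 1 ≤ L.length

/-- The `ℓ`-th roots of unity in `ℂ` form a finite type. -/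
noncomputable instance rootsFintype (ℓ : ℕ) [NeZero ℓ] :
    Fintype {z : ℂ // z ^ ℓ = 1} := by
  apply Fintype.ofFinset ((Polynomial.nthRoots ℓ (1 : ℂ)).toFinset)
  intro z
  rw [Multiset.mem_toFinset, Polynomial.mem_nthRoots (Nat.pos_of_ne_zero (NeZero.ne ℓ))]
  exact Iff.rfl

/-- The weight function of the lift (covering) graph `Ĝ` on `V × S¹_ℓ`. -/
noncomputable def liftP (p : V → V → ℝ) (σ : V → V → ℂ) (ℓ : ℕ) :
    V × {z : ℂ // z ^ ℓ = 1} → V × {z : ℂ // z ^ ℓ = 1} → ℝ :=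
  fun a b =>
    if Adj p a.1 b.1 ∧ (b.2 : ℂ) = (a.2 : ℂ) * σ a.1 b.1 then p a.1 b.1 else 0

/-- The lift embedding `f̂(x,ξ) = ξ·f(x)`. -/
noncomputable def liftEmb (ℓ : ℕ) (f : V → ℂ) : V × {z : ℂ // z ^ ℓ = 1} → ℂ :=
  fun a => (a.2 : ℂ) * f a.1

/-- A simple graph: all edge weights are `0` or `1`. -/
def Simple (p : V → V → ℝ) : Prop := ∀ x y, p x y = 0 ∨ p x y = 1

/-- `d` is the maximum degree of the graph. -/
def IsMaxDegree [Fintype V] (p : V → V → ℝ) (d : ℝ) : Prop :=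
  (∀ x, deg p x ≤ d) ∧ ∃ x, deg p x = d

/-- `l` is the least eigenvalue of `-Δ^σ`. -/
def IsLeastEigenvalue [Fintype V] (p : V → V → ℝ) (σ : V → V → ℂ) (l : ℝ) : Prop :=
  (∃ f : V → ℂ, f ≠ 0 ∧ ∀ x, -magLap p σ f x = (l : ℂ) * f x) ∧
  ∀ (μ : ℝ) (f : V → ℂ), f ≠ 0 → (∀ x, -magLap p σ f x = (μ : ℂ) * f x) → l ≤ μ

/-- The set of frustration values of a vertex subset `V₁`: sums
`∑_{edges {x,y} ⊆ V₁} p(x,y)|τ(x) − σ_{xy}τ(y)|` over switching functions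
`τ : V₁ → S¹_ℓ`.  (Each undirected edge is counted once, via the factor `1/2`.) -/
def frustrationSet [Fintype V] (p : V → V → ℝ) (σ : V → V → ℂ) (ℓ : ℕ)
    (V₁ : Finset V) : Set ℝ :=
  { r | ∃ τ : V → ℂ, (∀ x ∈ V₁, τ x ^ ℓ = 1) ∧
      r = (1 / 2) * ∑ x ∈ V₁, ∑ y ∈ V₁, p x y * ‖τ x - σ x y * τ y‖ }

/-- The set of Cheeger ratios `(ι^σ(V₁) + |E(V₁,V₁ᶜ)|)/vol(V₁)` over nonempty
vertex subsets `V₁`, where `ι^σ(V₁)` is the frustration index of `V₁`. -/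
def cheegerSet [Fintype V] (p : V → V → ℝ) (σ : V → V → ℂ) (ℓ : ℕ) : Set ℝ :=
  { r | ∃ V₁ : Finset V, V₁.Nonempty ∧ ∃ ι : ℝ, IsLeast (frustrationSet p σ ℓ V₁) ι ∧
      r = (ι + ∑ x ∈ V₁, ∑ y ∈ V₁ᶜ, p x y) / ∑ x ∈ V₁, deg p x }

/-- `h` is the magnetic Cheeger number `h₁^σ`. -/
def IsCheeger [Fintype V] (p : V → V → ℝ) (σ : V → V → ℂ) (ℓ : ℕ) (h : ℝ) : Prop :=
  IsLeast (cheegerSet p σ ℓ) h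


section Aux
variable [Fintype V]

lemma lap_add (p : V → V → ℝ) (f g : V → ℂ) (x : V) :
    lap p (fun v => f v + g v) x = lap p f x + lap p g x := by
  simp only [lap]
  rw [← mul_add, ← Finset.sum_add_distrib]
  congr 1
  exact Finset.sum_congr rfl fun y _ => by ring

lemma lap_smul (p : V → V → ℝ) (c : ℂ) (f : V → ℂ) (x : V) :
    lap p (fun v => c * f v) x = c * lap p f x := by
  have h : ∑ y, (p x y : ℂ) * (c * f y - c * f x) = c * ∑ y, (p x y : ℂ) * (f y - f x) := by
    rw [Finset.mul_sum]
    exact Finset.sum_congr rfl fun y _ => by ring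
  simp only [lap, h]
  ring

lemma lap_ofReal (p : V → V → ℝ) (u : V → ℝ) (x : V) :
    lap p (fun v => ((u v : ℝ) : ℂ)) x = ((lapR p u x : ℝ) : ℂ) := by
  simp only [lap, lapR]
  push_cast
  ring

lemma mul_conj_self (z : ℂ) : z * conj z = ((‖z‖ : ℝ) : ℂ) ^ 2 := by
  rw [Complex.mul_conj]; norm_cast
  rw [Complex.normSq_eq_norm_sq]

/-- Γ(f,f) is (energy/2), as a complex number. -/
lemma gamma_eq_energy (p : V → V → ℝ) (f : V → ℂ) (x : V) :
    gamma p f f x = ((energy p f x / 2 : ℝ) : ℂ) := by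
  have key : ∀ y : V, (p x y : ℂ) * (f y * conj (f y) - f x * conj (f x))
      - f x * conj ((p x y : ℂ) * (f y - f x))
      - ((p x y : ℂ) * (f y - f x)) * conj (f x)
      = (p x y : ℂ) * ((‖f y - f x‖ : ℝ) : ℂ) ^ 2 := by
    intro y
    rw [← mul_conj_self, map_mul, Complex.conj_ofReal, map_sub]
    ring
  have hs : (∑ y, (p x y : ℂ) * (f y * conj (f y) - f x * conj (f x)))
      - f x * (∑ y, conj ((p x y : ℂ) * (f y - f x)))
      - (∑ y, (p x y : ℂ) * (f y - f x)) * conj (f x)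
      = ∑ y, (p x y : ℂ) * ((‖f y - f x‖ : ℝ) : ℂ) ^ 2 := by
    rw [Finset.mul_sum, Finset.sum_mul, ← Finset.sum_sub_distrib, ← Finset.sum_sub_distrib]
    exact Finset.sum_congr rfl fun y _ => key y
  simp only [gamma, lap, energy]
  rw [map_mul, map_inv₀, Complex.conj_ofReal, map_sum]
  push_cast
  rw [← hs]
  ring

lemma gamma_smul_right (p : V → V → ℝ) (c : ℝ) (f g : V → ℂ) (x : V) :
    gamma p f (fun v => (c : ℂ) * g v) x = (c : ℂ) * gamma p f g x := by
  simp only [gamma]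
  have h1 : (fun v => f v * conj ((c : ℂ) * g v)) = fun v => (c : ℂ) * (f v * conj (g v)) := by
    funext v; rw [map_mul, Complex.conj_ofReal]; ring
  rw [h1, lap_smul, lap_smul, map_mul, Complex.conj_ofReal, map_mul, Complex.conj_ofReal]
  ring

lemma gamma_smul_left (p : V → V → ℝ) (c : ℝ) (f g : V → ℂ) (x : V) :
    gamma p (fun v => (c : ℂ) * f v) g x = (c : ℂ) * gamma p f g x := by
  simp only [gamma]
  have h1 : (fun v => ((c : ℂ) * f v) * conj (g v)) = fun v => (c : ℂ) * (f v * conj (g v)) := by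
    funext v; ring
  rw [h1, lap_smul, lap_smul]
  ring

/-- Laplacian of |f|² in terms of Γ. -/
lemma lap_normSq (p : V → V → ℝ) (f : V → ℂ) (x : V) :
    lap p (fun v => f v * conj (f v)) x =
      2 * gamma p f f x + f x * conj (lap p f x) + lap p f x * conj (f x) := by
  simp only [gamma]; ring

/-- Laplacian of Γ in terms of Γ₂. -/
lemma lap_gamma (p : V → V → ℝ) (f : V → ℂ) (x : V) :
    lap p (gamma p f f) x =
      2 * gamma2 p f f x + gamma p f (lap p f) x + gamma p (lap p f) f x := by
  simp only [gamma2]; ring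

/-- Total weighted sum of the Laplacian vanishes. -/
lemma sum_deg_lap (p : V → V → ℝ) (hG : IsWeightedGraph p) (g : V → ℂ) :
    ∑ x, ((deg p x : ℝ) : ℂ) * lap p g x = 0 := by
  simp only [lap]
  have h : ∀ x : V, ((deg p x : ℝ) : ℂ) * (((deg p x : ℝ) : ℂ)⁻¹ *
      ∑ y, (p x y : ℂ) * (g y - g x)) = ∑ y, (p x y : ℂ) * (g y - g x) := by
    intro x
    rw [← mul_assoc, mul_inv_cancel₀ (by exact_mod_cast (hG.deg_pos x).ne'), one_mul]
  rw [Finset.sum_congr rfl fun x _ => h x]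
  have h2 : ∀ x : V, (∑ y, (p x y : ℂ) * (g y - g x)) =
      (∑ y, (p x y : ℂ) * g y) - ((deg p x : ℝ) : ℂ) * g x := by
    intro x
    simp only [mul_sub]
    rw [Finset.sum_sub_distrib, ← Finset.sum_mul]
    congr 1
    simp only [deg]
    push_cast
    rfl
  rw [Finset.sum_congr rfl fun x _ => h2 x, Finset.sum_sub_distrib, sub_eq_zero,
    Finset.sum_comm]
  apply Finset.sum_congr rfl
  intro y _
  rw [← Finset.sum_mul]
  congr 1
  simp only [deg]
  push_cast
  exact Finset.sum_congr rfl fun z _ => by rw [hG.symm]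

/-- Maximum principle. -/
lemma lapR_nonpos_at_max (p : V → V → ℝ) (hG : IsWeightedGraph p) (u : V → ℝ)
    (x₀ : V) (hmax : ∀ y, u y ≤ u x₀) : lapR p u x₀ ≤ 0 := by
  unfold lapR
  apply mul_nonpos_of_nonneg_of_nonpos
  · exact inv_nonneg.2 (le_of_lt (hG.deg_pos x₀))
  · apply Finset.sum_nonpos
    intro y _
    exact mul_nonpos_of_nonneg_of_nonpos (hG.nonneg x₀ y) (by linarith [hmax y])

lemma energy_nonneg (p : V → V → ℝ) (hG : IsWeightedGraph p) (f : V → ℂ) (x : V) :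
    0 ≤ energy p f x := by
  unfold energy
  apply mul_nonneg (inv_nonneg.2 (le_of_lt (hG.deg_pos x)))
  exact Finset.sum_nonneg fun y _ => mul_nonneg (hG.nonneg x y) (by positivity)

end Aux

set_option maxHeartbeats 1000000 in
/-- Theorem 2.3.  For a harmonic eigenfunction `f` of `−Δ`
with eigenvalue `λ > 0` satisfying `CD(n,κ)`, and any `α > 2 − 2κ/λ`:
`|∇f|²(x) + αλ|f(x)|²
  ≤ λ((α² − 4/n)λ + 2κα)/((α − 2)λ + 2κ) · max_z |f(z)|²`. -/
theorem gradient_eigenfunction_bound {V : Type*} [Fintype V] [Nonempty V]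
    (p : V → V → ℝ) (hG : IsWeightedGraph p) (hconn : Connected p)
    (n κ : ℝ) (hn : 1 < n) (f : V → ℂ) (lam : ℝ) (hlam : 0 < lam)
    (hf0 : f ≠ 0) (heig : ∀ x, -lap p f x = (lam : ℂ) * f x)
    (hcd : SatCD p n κ f) (α : ℝ) (hα : 2 - 2 * κ / lam < α) (x : V) :
    energy p f x + α * lam * ‖f x‖ ^ 2 ≤
      lam * ((α ^ 2 - 4 / n) * lam + 2 * κ * α) / ((α - 2) * lam + 2 * κ) *
        ⨆ z : V, ‖f z‖ ^ 2 := by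
  classical
  -- eigenfunction equation
  have hl0 : lam ≠ 0 := ne_of_gt hlam
  have hlap : ∀ v, lap p f v = ((-lam : ℝ) : ℂ) * f v := by
    intro v
    have h := heig v
    push_cast
    linear_combination -h
  have hlapfn : lap p f = fun v => ((-lam : ℝ) : ℂ) * f v := funext hlap
  -- pointwise identities
  have hB : ∀ v, lap p (fun w => f w * conj (f w)) v =
      2 * gamma p f f v - 2 * (lam : ℂ) * (f v * conj (f v)) := by
    intro v
    rw [lap_normSq, hlap v, map_mul, Complex.conj_ofReal]
    push_cast
    ring
  have hC : ∀ v, lap p (gamma p f f) v =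
      2 * gamma2 p f f v - 2 * (lam : ℂ) * gamma p f f v := by
    intro v
    rw [lap_gamma, hlapfn, gamma_smul_right, gamma_smul_left]
    push_cast
    ring
  have hgre : ∀ v, (gamma p f f v).re = energy p f v / 2 := by
    intro v; rw [gamma_eq_energy, Complex.ofReal_re]
  have hnl : ∀ v, ‖lap p f v‖ ^ 2 = lam ^ 2 * ‖f v‖ ^ 2 := by
    intro v
    rw [hlap v, norm_mul]
    simp only [Complex.norm_real, Real.norm_eq_abs]
    rw [mul_pow, sq_abs]
    ring
  -- Lichnerowicz: κ ≤ lam - lam/n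
  set S := ∑ v, deg p v * ‖f v‖ ^ 2 with hSdef
  have hS : 0 < S := by
    obtain ⟨v₀, hv₀⟩ := Function.ne_iff.mp hf0
    refine Finset.sum_pos' (fun v _ => mul_nonneg (hG.deg_pos v).le (by positivity)) ?_
    exact ⟨v₀, Finset.mem_univ _, mul_pos (hG.deg_pos v₀)
      (pow_pos (norm_pos_iff.mpr hv₀) 2)⟩
  have hz1 : ∑ v, ((deg p v : ℝ) : ℂ) * lap p (fun w => f w * conj (f w)) v = 0 :=
    sum_deg_lap p hG _
  have hz2 : ∑ v, ((deg p v : ℝ) : ℂ) * lap p (gamma p f f) v = 0 :=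
    sum_deg_lap p hG _
  have key1 : ∀ v, ((deg p v : ℝ) : ℂ) * ((energy p f v / 2 : ℝ) : ℂ) =
      (1 / 2) * (((deg p v : ℝ) : ℂ) * lap p (fun w => f w * conj (f w)) v) +
      (lam : ℂ) * (((deg p v : ℝ) : ℂ) * ((‖f v‖ ^ 2 : ℝ) : ℂ)) := by
    intro v
    have h := hB v
    rw [gamma_eq_energy, mul_conj_self] at h
    push_cast
    push_cast at h
    linear_combination (-((deg p v : ℝ) : ℂ) / 2) * h
  have hsum1C : ∑ v, ((deg p v : ℝ) : ℂ) * ((energy p f v / 2 : ℝ) : ℂ) =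
      (lam : ℂ) * ∑ v, ((deg p v : ℝ) : ℂ) * ((‖f v‖ ^ 2 : ℝ) : ℂ) := by
    rw [Finset.sum_congr rfl fun v _ => key1 v, Finset.sum_add_distrib,
      ← Finset.mul_sum, ← Finset.mul_sum, hz1]
    ring
  have hsum1 : ∑ v, deg p v * (energy p f v / 2) = lam * S := by
    have h := hsum1C
    push_cast at h
    rw [hSdef]
    have h' := congrArg Complex.re hsum1C
    simp only [Complex.re_sum, Complex.re_ofReal_mul, Complex.ofReal_re] at h'
    exact h'
  have key2 : ∀ v, ((deg p v : ℝ) : ℂ) * gamma2 p f f v =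
      (1 / 2) * (((deg p v : ℝ) : ℂ) * lap p (gamma p f f) v) +
      (lam : ℂ) * (((deg p v : ℝ) : ℂ) * ((energy p f v / 2 : ℝ) : ℂ)) := by
    intro v
    have h := hC v
    rw [gamma_eq_energy] at h
    linear_combination (-((deg p v : ℝ) : ℂ) / 2) * h
  have hsum2C : ∑ v, ((deg p v : ℝ) : ℂ) * gamma2 p f f v =
      (lam : ℂ) * ∑ v, ((deg p v : ℝ) : ℂ) * ((energy p f v / 2 : ℝ) : ℂ) := by
    rw [Finset.sum_congr rfl fun v _ => key2 v, Finset.sum_add_distrib,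
      ← Finset.mul_sum, ← Finset.mul_sum, hz2]
    ring
  have hsum2 : ∑ v, deg p v * (gamma2 p f f v).re = lam * ∑ v, deg p v * (energy p f v / 2) := by
    have h := congrArg Complex.re hsum2C
    simp only [Complex.re_sum, Complex.re_ofReal_mul, Complex.ofReal_re] at h
    exact h
  have hlich : κ ≤ lam - lam / n := by
    have hsle : ∑ v, deg p v * ((1 / n) * (lam ^ 2 * ‖f v‖ ^ 2) + κ * (energy p f v / 2)) ≤
        ∑ v, deg p v * (gamma2 p f f v).re := by
      apply Finset.sum_le_sum
      intro v _
      apply mul_le_mul_of_nonneg_left _ (hG.deg_pos v).le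
      have h := hcd v
      rw [hnl v, hgre v] at h
      linarith
    have hL : ∑ v, deg p v * ((1 / n) * (lam ^ 2 * ‖f v‖ ^ 2) + κ * (energy p f v / 2)) =
        (1 / n) * lam ^ 2 * S + κ * ∑ v, deg p v * (energy p f v / 2) := by
      rw [hSdef, Finset.mul_sum, Finset.mul_sum, ← Finset.sum_add_distrib]
      exact Finset.sum_congr rfl fun v _ => by ring
    rw [hL, hsum1, hsum2, hsum1] at hsle
    by_contra hcon
    push_neg at hcon
    have hp := mul_pos (mul_pos hlam hS) (sub_pos.mpr hcon)
    ring_nf at hsle hp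
    linarith
  -- positivity of the denominator and numerator constants
  have h2k : 2 * lam - 2 * κ < α * lam := by
    have hmul := mul_lt_mul_of_pos_right hα hlam
    have he : 2 * κ / lam * lam = 2 * κ := div_mul_cancel₀ _ hl0
    ring_nf at hmul he ⊢
    linarith
  have hc' : 0 < (α - 2) * lam + 2 * κ := by nlinarith [h2k]
  have hn0 : 0 < n := by linarith
  have hαn : 2 / n < α := by
    have h3 : 2 * (lam / n) < α * lam := by linarith [hlich, h2k]
    rw [div_lt_iff₀ hn0]
    nlinarith [mul_lt_mul_of_pos_right h3 hn0, div_mul_cancel₀ lam (ne_of_gt hn0), hlam]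
  have hα0 : 0 < α := lt_trans (div_pos two_pos hn0) hαn
  have hN : 0 < (α ^ 2 - 4 / n) * lam + 2 * κ * α := by
    have ha := mul_lt_mul_of_pos_left h2k hα0
    have hb := mul_lt_mul_of_pos_left hαn (mul_pos two_pos hlam)
    ring_nf at ha hb ⊢
    nlinarith [ha, hb]
  -- the maximum point of the functional
  obtain ⟨x₀, -, hx₀⟩ := Finset.exists_max_image Finset.univ
      (fun v => energy p f v + α * lam * ‖f v‖ ^ 2) Finset.univ_nonempty
  have hFFx : energy p f x + α * lam * ‖f x‖ ^ 2 ≤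
      energy p f x₀ + α * lam * ‖f x₀‖ ^ 2 := hx₀ x (Finset.mem_univ x)
  have hmaxp : lapR p (fun v => energy p f v + α * lam * ‖f v‖ ^ 2) x₀ ≤ 0 :=
    lapR_nonpos_at_max p hG _ x₀ (fun y => hx₀ y (Finset.mem_univ y))
  have hFc : (fun v => ((energy p f v + α * lam * ‖f v‖ ^ 2 : ℝ) : ℂ)) =
      fun v => 2 * gamma p f f v + ((α * lam : ℝ) : ℂ) * (f v * conj (f v)) := by
    funext v
    rw [gamma_eq_energy, mul_conj_self]
    push_cast
    ring
  have hlapFF : ((lapR p (fun v => energy p f v + α * lam * ‖f v‖ ^ 2) x₀ : ℝ) : ℂ) =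
      2 * (2 * gamma2 p f f x₀ - 2 * (lam : ℂ) * gamma p f f x₀) +
      ((α * lam : ℝ) : ℂ) * (2 * gamma p f f x₀ - 2 * (lam : ℂ) * (f x₀ * conj (f x₀))) := by
    rw [← lap_ofReal, hFc]
    rw [lap_add p (fun v => 2 * gamma p f f v)
        (fun v => ((α * lam : ℝ) : ℂ) * (f v * conj (f v))) x₀,
      lap_smul p 2 (gamma p f f) x₀,
      lap_smul p ((α * lam : ℝ) : ℂ) (fun v => f v * conj (f v)) x₀, hB x₀, hC x₀]
  have hg2C : gamma2 p f f x₀ =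
      (((lapR p (fun v => energy p f v + α * lam * ‖f v‖ ^ 2) x₀
        + 2 * lam * energy p f x₀ - α * lam * energy p f x₀
        + 2 * α * lam ^ 2 * ‖f x₀‖ ^ 2) / 4 : ℝ) : ℂ) := by
    have h := hlapFF
    rw [gamma_eq_energy, mul_conj_self] at h
    push_cast at h ⊢
    linear_combination -h / 4
  have hg2 : (gamma2 p f f x₀).re =
      (lapR p (fun v => energy p f v + α * lam * ‖f v‖ ^ 2) x₀
        + 2 * lam * energy p f x₀ - α * lam * energy p f x₀
        + 2 * α * lam ^ 2 * ‖f x₀‖ ^ 2) / 4 := by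
    rw [hg2C, Complex.ofReal_re]
  have hcd0 := hcd x₀
  rw [hnl x₀, hgre x₀] at hcd0
  have hKey : ((α - 2) * lam + 2 * κ) * energy p f x₀ ≤
      (2 * α - 4 / n) * lam ^ 2 * ‖f x₀‖ ^ 2 := by
    have h1 := hmaxp
    have h2 := hg2
    have h3 := hcd0
    ring_nf at h1 h2 h3 ⊢
    nlinarith [h1, h2, h3]
  have hM : ∀ z : V, ‖f z‖ ^ 2 ≤ ⨆ z : V, ‖f z‖ ^ 2 := fun z =>
    le_ciSup (f := fun z : V => ‖f z‖ ^ 2) (Set.Finite.bddAbove (Set.finite_range _)) z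
  rw [div_mul_eq_mul_div, le_div_iff₀ hc']
  nlinarith [hKey, mul_le_mul_of_nonneg_right hFFx hc'.le,
    mul_le_mul_of_nonneg_left (hM x₀) (mul_pos hlam hN).le, energy_nonneg p hG f x₀]

end Mag
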